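/- Let π be an equivalence relation on Fin m with equivalence classes B_1, …, B_t. Then the number of Z2-stable equivalence relations d on Fin m × ZMod 2 whose induced relation R^d equals π is the product over i = 1, …, t of (2^(|B_i| - 1) + 1). -/

import Mathlib

/-- An equivalence relation on `T × ZMod 2` is `ZMod 2`-stable if it is preserved by
the action `g·(t,x) = (t, g+x)`. -/
def IsStable {T : Type*} (d : Setoid (T × ZMod 2)) : Prop :=
  ∀ g : ZMod 2, ∀ p q : T × ZMod 2, d.r p q → d.r (p.1, g + p.2) (q.1, g + q.2)

namespace Stmt6

lemma z2_add_self (a : ZMod 2) : a + a = 0 := by revert a; decide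
lemma z2_add_add (a b : ZMod 2) : a + (a + b) = b := by revert a b; decide
lemma z2_eq_of_zero_eq_add {a b : ZMod 2} (h : 0 = a + b) : a = b := by
  revert h; revert a b; decide
lemma z2_add_eq_one {a b : ZMod 2} (h : a ≠ b) : a + b = 1 := by
  revert h; revert a b; decide
lemma z2_cases (a : ZMod 2) : a = 0 ∨ a = 1 := by revert a; decide
lemma z2_ne_add (a : ZMod 2) : ¬ (0 + a = 1 + a) := by revert a; decide
lemma z2_eq_add_one {a b : ZMod 2} (h : a ≠ b) : b = a + 1 := by
  revert h; revert a b; decide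

variable {m : ℕ} (π : Setoid (Fin m))

lemma classes_nonempty : ∀ B ∈ π.classes, (B : Set (Fin m)).Nonempty := by
  rintro B ⟨y, rfl⟩; exact ⟨y, π.refl y⟩

noncomputable def rep (B : π.classes) : Fin m := (classes_nonempty π B B.2).some

lemma rep_mem (B : π.classes) : rep π B ∈ (B : Set (Fin m)) :=
  (classes_nonempty π B B.2).some_mem

def cls (i : Fin m) : π.classes := ⟨{x | π.r x i}, i, rfl⟩

lemma mem_cls (i : Fin m) : i ∈ (cls π i : Set (Fin m)) := π.refl i

lemma mem_cls_iff {i x : Fin m} : x ∈ (cls π i : Set (Fin m)) ↔ π.r x i := Iff.rfl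

lemma cls_eq {i j : Fin m} (h : π.r i j) : cls π i = cls π j :=
  Subtype.ext (Set.ext fun x => ⟨fun hx => π.trans hx h, fun hx => π.trans hx (π.symm h)⟩)

lemma cls_eq_of_mem {B : π.classes} {i : Fin m} (h : i ∈ (B : Set (Fin m))) :
    cls π i = B := by
  obtain ⟨B, y, rfl⟩ := B
  exact Subtype.ext (Set.ext fun x =>
    ⟨fun hx => π.trans hx h, fun hx => π.trans hx (π.symm h)⟩)

lemma rel_of_mem {B : π.classes} {i j : Fin m} (hi : i ∈ (B : Set (Fin m)))
    (hj : j ∈ (B : Set (Fin m))) : π.r i j := by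
  have := cls_eq_of_mem π hj
  rw [← this] at hi; exact hi

/-- The parameter space for one class. -/
def E (B : π.classes) : Type :=
  {ε : Fin m → ZMod 2 // ε (rep π B) = 0 ∧ ∀ i ∉ (B : Set (Fin m)), ε i = 0}

instance (B : π.classes) : Finite (E π B) := by unfold E; infer_instance

/-- The total parameter space. -/
def Data : Type := ∀ B : π.classes, Option (E π B)

variable {π}

def δ (f : Data π) (i : Fin m) : ZMod 2 :=
  (f (cls π i)).elim 0 (fun ε => ε.1 i)

def col (f : Data π) (i : Fin m) : Prop := f (cls π i) = none

lemma col_congr (f : Data π) {i j : Fin m} (h : π.r i j) : col f i ↔ col f j := by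
  unfold col; rw [cls_eq π h]

lemma δ_congr (f : Data π) {i j : Fin m} (h : π.r i j) {ε : E π (cls π i)}
    (hε : f (cls π i) = some ε) : δ f i = ε.1 i := by
  unfold δ; rw [hε]; rfl

/-- From data to a setoid. -/
def toSetoid (f : Data π) : Setoid (Fin m × ZMod 2) where
  r p q := π.r p.1 q.1 ∧ (col f p.1 ∨ p.2 + δ f p.1 = q.2 + δ f q.1)
  iseqv := by
    refine ⟨fun p => ⟨π.refl _, Or.inr rfl⟩, ?_, ?_⟩
    · rintro p q ⟨h1, h2⟩
      refine ⟨π.symm h1, ?_⟩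
      rcases h2 with h2 | h2
      · exact Or.inl ((col_congr f h1).mp h2)
      · exact Or.inr h2.symm
    · rintro p q s ⟨h1, h2⟩ ⟨h3, h4⟩
      refine ⟨π.trans h1 h3, ?_⟩
      rcases h2 with h2 | h2
      · exact Or.inl h2
      rcases h4 with h4 | h4
      · exact Or.inl ((col_congr f h1).mpr h4)
      · exact Or.inr (h2.trans h4)

lemma toSetoid_r (f : Data π) (i j : Fin m) (x y : ZMod 2) :
    (toSetoid f).r (i, x) (j, y) ↔ π.r i j ∧ (col f i ∨ x + δ f i = y + δ f j) :=
  Iff.rfl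

lemma toSetoid_stable (f : Data π) : IsStable (toSetoid f) := by
  rintro g ⟨i, x⟩ ⟨j, y⟩ ⟨h1, h2⟩
  refine ⟨h1, ?_⟩
  rcases h2 with h2 | h2
  · exact Or.inl h2
  · refine Or.inr ?_
    show g + x + δ f i = g + y + δ f j
    rw [add_assoc, add_assoc, h2]

lemma toSetoid_induced (f : Data π) (i j : Fin m) :
    (∃ x y : ZMod 2, (toSetoid f).r (i, x) (j, y)) ↔ π.r i j := by
  constructor
  · rintro ⟨x, y, h, -⟩; exact h
  · intro h
    by_cases hc : col f i
    · exact ⟨0, 0, h, Or.inl hc⟩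
    · exact ⟨δ f j, δ f i, h, Or.inr (add_comm _ _)⟩

section Inverse

variable (d : Setoid (Fin m × ZMod 2)) (hstab : IsStable d)
  (hind : ∀ i j : Fin m, (∃ x y : ZMod 2, d.r (i, x) (j, y)) ↔ π.r i j)

open Classical in
/-- The candidate `ε` function for a class. -/
noncomputable def epsOf (B : π.classes) : Fin m → ZMod 2 := fun i =>
  if i ∈ (B : Set (Fin m)) then (if d.r (rep π B, 0) (i, 0) then 0 else 1) else 0

open Classical in
lemma epsOf_spec (B : π.classes) : epsOf d B (rep π B) = 0 ∧
    ∀ i ∉ (B : Set (Fin m)), epsOf d B i = 0 := by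
  constructor
  · have h0 : d.r (rep π B, 0) (rep π B, 0) := d.refl _
    simp only [epsOf]; rw [if_pos (rep_mem π B), if_pos h0]
  · intro i hi; simp only [epsOf]; rw [if_neg hi]

open Classical in
/-- From a setoid to data. -/
noncomputable def toData : Data π := fun B =>
  if d.r (rep π B, 0) (rep π B, 1) then none
  else some ⟨epsOf d B, epsOf_spec d B⟩

open Classical in
lemma toData_of_col (B : π.classes) (h : d.r (rep π B, 0) (rep π B, 1)) :
    toData d B = none := by unfold toData; rw [if_pos h]

open Classical in
lemma toData_of_not_col (B : π.classes) (h : ¬ d.r (rep π B, 0) (rep π B, 1)) :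
    toData d B = some ⟨epsOf d B, epsOf_spec d B⟩ := by unfold toData; rw [if_neg h]

include hstab

lemma shift_iff (g : ZMod 2) (i j : Fin m) (x y : ZMod 2) :
    d.r (i, x) (j, y) ↔ d.r (i, g + x) (j, g + y) := by
  constructor
  · exact fun h => hstab g (i, x) (j, y) h
  · intro h
    have := hstab g (i, g + x) (j, g + y) h
    simpa [show ∀ a b : ZMod 2, a + (a + b) = b by decide] using this

include hind

lemma rel_of_d {i j : Fin m} {x y : ZMod 2} (h : d.r (i, x) (j, y)) : π.r i j :=
  (hind i j).mp ⟨x, y, h⟩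

lemma exists_rel {i j : Fin m} (h : π.r i j) : ∃ z, d.r (i, 0) (j, z) := by
  obtain ⟨x, y, hxy⟩ := (hind i j).mpr h
  refine ⟨x + y, ?_⟩
  have := hstab x (i, x) (j, y) hxy
  simpa [z2_add_self] using this

lemma unique_rel {r k : Fin m} (hcol : ¬ d.r (r, 0) (r, 1)) {z z' : ZMod 2}
    (h1 : d.r (r, 0) (k, z)) (h2 : d.r (r, 0) (k, z')) : z = z' := by
  by_contra hne
  have hz : z + z' = 1 := z2_add_eq_one hne
  have h3 := hstab (z + z') (r, 0) (k, z) h1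
  simp only at h3
  have h4 : z + z' + z = z' := by rw [add_comm z z', add_assoc, z2_add_self, add_zero]
  rw [h4, add_zero] at h3
  exact hcol (by rw [← hz]; exact d.trans h2 (d.symm h3))

lemma fiber_all {r : Fin m} (hcol : d.r (r, 0) (r, 1)) (a b : ZMod 2) :
    d.r (r, a) (r, b) := by
  rcases eq_or_ne a b with rfl | hne
  · exact d.refl _
  · have hb : b = a + 1 := z2_eq_add_one hne
    have := hstab a (r, 0) (r, 1) hcol
    simpa [hb] using this

/-- If the class of `i` is collapsed, everything over the class is related. -/
lemma rel_of_col {r i j : Fin m} (hcol : d.r (r, 0) (r, 1)) (hri : π.r r i)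
    (hrj : π.r r j) (x y : ZMod 2) : d.r (i, x) (j, y) := by
  obtain ⟨z, hz⟩ := exists_rel d hstab hind hri
  obtain ⟨w, hw⟩ := exists_rel d hstab hind hrj
  have h1 := hstab (x + z) (r, 0) (i, z) hz
  have h2 := hstab (y + w) (r, 0) (j, w) hw
  simp only [add_zero] at h1 h2
  have e1 : x + z + z = x := by rw [add_assoc, z2_add_self, add_zero]
  have e2 : y + w + w = y := by rw [add_assoc, z2_add_self, add_zero]
  rw [e1] at h1; rw [e2] at h2
  exact d.trans (d.symm h1) (d.trans (fiber_all d hstab hind hcol _ _) h2)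

lemma rel_char {r i j : Fin m} (hcol : ¬ d.r (r, 0) (r, 1)) (hri : π.r r i)
    (hrj : π.r r j) {zi zj : ZMod 2} (hzi : d.r (r, 0) (i, zi))
    (hzj : d.r (r, 0) (j, zj)) (x y : ZMod 2) :
    d.r (i, x) (j, y) ↔ x + zi = y + zj := by
  have h1 := hstab (x + zi) (r, 0) (i, zi) hzi
  have h2 := hstab (y + zj) (r, 0) (j, zj) hzj
  simp only [add_zero] at h1 h2
  have e1 : x + zi + zi = x := by rw [add_assoc, z2_add_self, add_zero]
  have e2 : y + zj + zj = y := by rw [add_assoc, z2_add_self, add_zero]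
  rw [e1] at h1; rw [e2] at h2
  constructor
  · intro h
    have h5 : d.r (r, x + zi) (r, y + zj) := d.trans h1 (d.trans h (d.symm h2))
    have h0 := hstab (x + zi) (r, x + zi) (r, y + zj) h5
    simp only at h0
    rw [z2_add_self] at h0
    exact z2_eq_of_zero_eq_add (unique_rel d hstab hind hcol (d.refl (r, 0)) h0)
  · intro h
    rw [h] at h1
    exact d.trans (d.symm h1) h2

lemma d_rep_eps (B : π.classes) (h : ¬ d.r (rep π B, 0) (rep π B, 1)) {i : Fin m}
    (hi : i ∈ (B : Set (Fin m))) (hri : π.r (rep π B) i) :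
    d.r (rep π B, 0) (i, epsOf d B i) := by
  classical
  obtain ⟨z, hz⟩ := exists_rel d hstab hind hri
  simp only [epsOf]
  rw [if_pos hi]
  by_cases h0 : d.r (rep π B, 0) (i, 0)
  · rw [if_pos h0]; exact h0
  · rw [if_neg h0]
    rcases z2_cases z with rfl | rfl
    · exact absurd hz h0
    · exact hz

lemma toSetoid_toData : toSetoid (toData d : Data π) = d := by
  classical
  apply Setoid.ext
  rintro ⟨i, x⟩ ⟨j, y⟩
  show (toSetoid (toData d)).r (i, x) (j, y) ↔ d.r (i, x) (j, y)
  rw [toSetoid_r]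
  set B := cls π i with hB
  set r := rep π B with hrdef
  have hri : π.r r i := rep_mem π B
  by_cases hπ : π.r i j
  · have hrj : π.r r j := π.trans hri hπ
    have hBj : cls π j = B := (cls_eq π hπ).symm
    by_cases hc : d.r (r, 0) (r, 1)
    · have hcol : col (toData d : Data π) i := by
        show (toData d : Data π) (cls π i) = none
        rw [← hB]; exact toData_of_col d B hc
      exact iff_of_true ⟨hπ, Or.inl hcol⟩ (rel_of_col d hstab hind hc hri hrj x y)
    · have hsome := toData_of_not_col d B hc
      have hcol : ¬ col (toData d : Data π) i := by
        show ¬ (toData d : Data π) (cls π i) = none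
        rw [← hB, hsome]; simp
      have hδi : δ (toData d : Data π) i = epsOf d B i := by
        unfold δ; rw [← hB, hsome]; rfl
      have hδj : δ (toData d : Data π) j = epsOf d B j := by
        unfold δ; rw [hBj, hsome]; rfl
      rw [hδi, hδj]
      have hchar := rel_char d hstab hind hc hri hrj
        (d_rep_eps d hstab hind B hc (mem_cls π i) hri)
        (d_rep_eps d hstab hind B hc (by rw [← hBj]; exact mem_cls π j) hrj) x y
      simp only [hπ, hcol, true_and, false_or]
      exact hchar.symm
  · constructor
    · rintro ⟨h1, -⟩; exact absurd h1 hπ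
    · intro h; exact absurd (rel_of_d d hstab hind h) hπ

end Inverse

lemma toData_toSetoid (f : Data π) : toData (toSetoid f) = f := by
  classical
  funext B
  set r := rep π B with hrdef
  have hr : r ∈ (B : Set (Fin m)) := rep_mem π B
  have hclsr : cls π r = B := cls_eq_of_mem π hr
  have hcol_iff : (toSetoid f).r (r, 0) (r, 1) ↔ f B = none := by
    rw [toSetoid_r]
    constructor
    · rintro ⟨-, h | h⟩
      · rw [← hclsr]; exact h
      · exact absurd h (z2_ne_add _)
    · intro h
      exact ⟨π.refl r, Or.inl (by show f (cls π r) = none; rw [hclsr]; exact h)⟩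
  rcases hf : f B with _ | ε
  · rw [toData_of_col _ B (hcol_iff.mpr hf)]
  · have hnc : ¬ (toSetoid f).r (r, 0) (r, 1) := fun h => by
      rw [hcol_iff.mp h] at hf; cases hf
    rw [toData_of_not_col _ B hnc]
    congr 1
    apply Subtype.ext
    funext i
    show epsOf (toSetoid f) B i = ε.1 i
    simp only [epsOf]
    by_cases hi : i ∈ (B : Set (Fin m))
    · rw [if_pos hi]
      have hcli : cls π i = B := cls_eq_of_mem π hi
      have hδr : δ f r = 0 := by unfold δ; rw [hclsr, hf]; exact ε.2.1
      have hδi : δ f i = ε.1 i := by unfold δ; rw [hcli, hf]; rfl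
      have hcolr : ¬ col f r := by
        show ¬ f (cls π r) = none
        rw [hclsr, hf]; simp
      have hcond : (toSetoid f).r (r, 0) (i, 0) ↔ ε.1 i = 0 := by
        rw [toSetoid_r, hδr, hδi]
        constructor
        · rintro ⟨-, h | h⟩
          · exact absurd h hcolr
          · simpa using h.symm
        · intro h
          exact ⟨rel_of_mem π hr hi, Or.inr (by rw [h])⟩
      rcases z2_cases (ε.1 i) with h0 | h0
      · rw [if_pos (hcond.mpr h0), h0]
      · rw [if_neg (fun h => by rw [hcond.mp h] at h0; exact absurd h0 (by decide)), h0]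
    · rw [if_neg hi]
      exact (ε.2.2 i hi).symm

variable (π)

noncomputable def mainEquiv :
    {d : Setoid (Fin m × ZMod 2) // IsStable d ∧
      ∀ i j : Fin m, (∃ x y : ZMod 2, d.r (i, x) (j, y)) ↔ π.r i j} ≃ Data π where
  toFun d := toData d.1
  invFun f := ⟨toSetoid f, toSetoid_stable f, toSetoid_induced f⟩
  left_inv d := Subtype.ext (toSetoid_toData d.1 d.2.1 d.2.2)
  right_inv f := toData_toSetoid f

open Classical in
noncomputable def eEquiv (B : π.classes) :
    E π B ≃ ((((B : Set (Fin m)) \ {rep π B} : Set (Fin m))) → ZMod 2) where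
  toFun ε i := ε.1 i
  invFun h := ⟨fun i => if hh : i ∈ ((B : Set (Fin m)) \ {rep π B}) then h ⟨i, hh⟩ else 0, by
    constructor
    · exact dif_neg (fun h' => h'.2 rfl)
    · intro i hi; exact dif_neg (fun h' => hi h'.1)⟩
  left_inv ε := Subtype.ext (funext fun i => by
    by_cases hh : i ∈ ((B : Set (Fin m)) \ {rep π B})
    · simp only [dif_pos hh]
    · simp only [dif_neg hh]
      rcases Classical.em (i ∈ (B : Set (Fin m))) with hi | hi
      · have : i = rep π B := by
          by_contra hne
          exact hh ⟨hi, hne⟩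
        rw [this, ε.2.1]
      · rw [ε.2.2 i hi])
  right_inv h := funext fun i => by simp only [dif_pos i.2]

lemma card_E (B : π.classes) :
    Nat.card (E π B) = 2 ^ ((B : Set (Fin m)).ncard - 1) := by
  rw [Nat.card_congr (eEquiv π B), Nat.card_fun, Nat.card_coe_set_eq,
    Set.ncard_diff_singleton_of_mem (rep_mem π B)]
  congr 1
  simp [Nat.card_eq_fintype_card]

theorem main :
    Nat.card {d : Setoid (Fin m × ZMod 2) // IsStable d ∧
      ∀ i j : Fin m, (∃ x y : ZMod 2, d.r (i, x) (j, y)) ↔ π.r i j} =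
      ∏ B ∈ (Set.toFinite π.classes).toFinset, (2 ^ (B.ncard - 1) + 1) := by
  haveI : Fintype π.classes := (Set.toFinite π.classes).fintype
  rw [Nat.card_congr (mainEquiv π)]
  show Nat.card (∀ B : π.classes, Option (E π B)) = _
  rw [Nat.card_pi,
    Finset.prod_subtype (Set.toFinite π.classes).toFinset
      (fun x => (Set.toFinite π.classes).mem_toFinset) (fun B => 2 ^ (B.ncard - 1) + 1)]
  apply Finset.prod_congr rfl
  intro B _
  haveI : Fintype (E π B) := Fintype.ofFinite _
  rw [Nat.card_eq_fintype_card, Fintype.card_option, ← Nat.card_eq_fintype_card, card_E]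

end Stmt6

/-- given an equivalence relation `π` on `Fin m`, the number of
`ZMod 2`-stable equivalence relations `d` on `Fin m × ZMod 2` whose induced
relation `R^d` (given by `i R^d j ↔ ∃ x y, (i,x) ∼ (j,y)`) equals `π` is the
product, over the equivalence classes `B` of `π`, of `2^(|B|-1) + 1`. -/
theorem stmt_6 (m : ℕ) (π : Setoid (Fin m)) :
    Nat.card {d : Setoid (Fin m × ZMod 2) // IsStable d ∧
      ∀ i j : Fin m, (∃ x y : ZMod 2, d.r (i, x) (j, y)) ↔ π.r i j} =
      ∏ B ∈ (Set.toFinite π.classes).toFinset, (2 ^ (B.ncard - 1) + 1) := by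
  exact Stmt6.main π
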